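/- Let r ≥ 1 be an integer and for j = 1, 2, 3 and h ∈ ℝ set Z_j(h) = cos((r·h + 2π(j−1))/3) + (i/2)·sin(2·(r·h + 2π(j−1))/3). Then for all u ∈ ℂ and h ∈ ℝ, with w = e^{i·r·h} and w̄ = e^{−i·r·h}: 64·∏_{j=1}^{3} (u − Z_j(h)) = 64u³ − 12u·(3 + 2(w − w̄)) − 14(w + w̄) − (w² − w̄²). -/

import Mathlib

open Complex Real

lemma fig8_aux (u : ℂ) (t : ℝ) :
    64 * ((u - (((Real.cos t : ℝ) : ℂ) + Complex.I / 2 * ((Real.sin (2*t) : ℝ) : ℂ))) *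
      ((u - (((Real.cos (t + 2*Real.pi/3) : ℝ) : ℂ) +
          Complex.I / 2 * ((Real.sin (2*t + 4*Real.pi/3) : ℝ) : ℂ))) *
       (u - (((Real.cos (t + 4*Real.pi/3) : ℝ) : ℂ) +
          Complex.I / 2 * ((Real.sin (2*t + 8*Real.pi/3) : ℝ) : ℂ))))) =
      64 * u ^ 3
        - 12 * u * (3 + 2 * (Complex.exp (Complex.I * ((3*t : ℝ) : ℂ))
            - Complex.exp (-(Complex.I * ((3*t : ℝ) : ℂ)))))
        - 14 * (Complex.exp (Complex.I * ((3*t : ℝ) : ℂ))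
            + Complex.exp (-(Complex.I * ((3*t : ℝ) : ℂ))))
        - (Complex.exp (Complex.I * ((3*t : ℝ) : ℂ)) ^ 2
            - Complex.exp (-(Complex.I * ((3*t : ℝ) : ℂ))) ^ 2) := by
  have hc23 : Real.cos (2*Real.pi/3) = -(1/2) := by
    rw [show (2*Real.pi/3 : ℝ) = Real.pi - Real.pi/3 by ring, Real.cos_pi_sub,
      Real.cos_pi_div_three]
  have hs23 : Real.sin (2*Real.pi/3) = Real.sqrt 3 / 2 := by
    rw [show (2*Real.pi/3 : ℝ) = Real.pi - Real.pi/3 by ring, Real.sin_pi_sub,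
      Real.sin_pi_div_three]
  have hc43 : Real.cos (4*Real.pi/3) = -(1/2) := by
    rw [show (4*Real.pi/3 : ℝ) = Real.pi - (-(Real.pi/3)) by ring, Real.cos_pi_sub,
      Real.cos_neg, Real.cos_pi_div_three]
  have hs43 : Real.sin (4*Real.pi/3) = -(Real.sqrt 3 / 2) := by
    rw [show (4*Real.pi/3 : ℝ) = Real.pi - (-(Real.pi/3)) by ring, Real.sin_pi_sub,
      Real.sin_neg, Real.sin_pi_div_three]
  rw [show (2*t + 8*Real.pi/3 : ℝ) = (2*t + 2*Real.pi/3) + 2*Real.pi by ring,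
    Real.sin_add_two_pi]
  rw [show -(Complex.I * ((3*t : ℝ) : ℂ)) = ((-(3*t) : ℝ) : ℂ) * Complex.I by push_cast; ring,
    show Complex.I * ((3*t : ℝ) : ℂ) = ((3*t : ℝ) : ℂ) * Complex.I by ring,
    Complex.exp_mul_I, Complex.exp_mul_I, ← Complex.ofReal_cos, ← Complex.ofReal_sin,
    ← Complex.ofReal_cos, ← Complex.ofReal_sin, Real.cos_neg, Real.sin_neg,
    Real.cos_three_mul, Real.sin_three_mul,
    Real.cos_add, Real.cos_add, Real.sin_add, Real.sin_add,
    Real.sin_two_mul, Real.cos_two_mul',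
    hc23, hs23, hc43, hs43]
  have hsc : Complex.sin ((t : ℝ) : ℂ)^2 + Complex.cos ((t : ℝ) : ℂ)^2 = 1 :=
    Complex.sin_sq_add_cos_sq _
  have hq : ((Real.sqrt 3 : ℝ) : ℂ)^2 = 3 := by
    rw [← Complex.ofReal_pow, Real.sq_sqrt (by norm_num : (3:ℝ) ≥ 0)]; norm_num
  have hI : Complex.I^2 = -1 := Complex.I_sq
  push_cast
  set C : ℂ := Complex.cos ((t : ℝ) : ℂ)
  set S : ℂ := Complex.sin ((t : ℝ) : ℂ)
  set Q : ℂ := ((Real.sqrt 3 : ℝ) : ℂ)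
  linear_combination
    ((16:ℂ)*C*Q^2 + (-12:ℂ)*C*Q^2*Complex.I^2 + (48:ℂ)*C*S*Complex.I + (4:ℂ)*C*S*Q^2*Complex.I^3 + (-12:ℂ)*C*S^2*Q^2*Complex.I^2 + (4:ℂ)*C*S^3*Q^2*Complex.I^3 + (-48:ℂ)*C^3*Complex.I^2 + (20:ℂ)*C^3*Q^2*Complex.I^2 + (-64:ℂ)*C^3*S*Complex.I + (-16:ℂ)*C^3*S*Complex.I^3 + (-12:ℂ)*C^3*S*Q^2*Complex.I^3 + (-16:ℂ)*u*Q^2 + (-4:ℂ)*u*Q^2*Complex.I^2 + (-192:ℂ)*u*S*Complex.I + (16:ℂ)*u*S*Q^2*Complex.I + (-4:ℂ)*u*S^2*Q^2*Complex.I^2 + (-48:ℂ)*u*C^2*Complex.I^2 + (12:ℂ)*u*C^2*Q^2*Complex.I^2) * hsc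
    + ((16:ℂ)*C + (-12:ℂ)*C*Complex.I^2 + (4:ℂ)*C*S*Complex.I^3 + (-16:ℂ)*C^3 + (32:ℂ)*C^3*Complex.I^2 + (16:ℂ)*C^3*S*Complex.I + (-16:ℂ)*C^3*S*Complex.I^3 + (-16:ℂ)*C^5*Complex.I^2 + (16:ℂ)*C^5*S*Complex.I^3 + (-16:ℂ)*u + (-4:ℂ)*u*Complex.I^2 + (16:ℂ)*u*S*Complex.I + (16:ℂ)*u*C^2 + (16:ℂ)*u*C^2*Complex.I^2 + (-32:ℂ)*u*C^2*S*Complex.I + (-16:ℂ)*u*C^4*Complex.I^2) * hq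
    + ((-36:ℂ)*C + (12:ℂ)*C*S*Complex.I + (48:ℂ)*C^3 + (-64:ℂ)*C^3*S*Complex.I + (64:ℂ)*C^5*S*Complex.I + (-12:ℂ)*u) * hI

/-- The figure-8 family identity: with
`Z_j(h) = cos((r·h + 2π(j−1))/3) + (i/2)·sin(2·(r·h + 2π(j−1))/3)`, `w = e^{irh}`,
`w̄ = e^{−irh}`: `64·∏_{j=1}^{3}(u − Z_j(h)) = 64u³ − 12u(3 + 2(w − w̄)) − 14(w + w̄) − (w² − w̄²)`. -/
theorem figure_eight_braid_polynomial (r : ℕ) (hr : 1 ≤ r) (u : ℂ) (h : ℝ) :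
    64 * ∏ j ∈ Finset.Icc (1 : ℕ) 3,
        (u - (((Real.cos ((r * h + 2 * Real.pi * ((j : ℝ) - 1)) / 3) : ℝ) : ℂ) +
          Complex.I / 2 * ((Real.sin (2 * (r * h + 2 * Real.pi * ((j : ℝ) - 1)) / 3) : ℝ) : ℂ))) =
      64 * u ^ 3
        - 12 * u * (3 + 2 * (Complex.exp (Complex.I * (r * h : ℝ))
            - Complex.exp (-(Complex.I * (r * h : ℝ)))))
        - 14 * (Complex.exp (Complex.I * (r * h : ℝ)) + Complex.exp (-(Complex.I * (r * h : ℝ))))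
        - (Complex.exp (Complex.I * (r * h : ℝ)) ^ 2
            - Complex.exp (-(Complex.I * (r * h : ℝ))) ^ 2) := by
  have hIcc : Finset.Icc (1 : ℕ) 3 = {1, 2, 3} := rfl
  rw [hIcc, Finset.prod_insert (by decide), Finset.prod_insert (by decide),
    Finset.prod_singleton]
  rw [show (((r : ℝ) * h : ℝ) : ℂ) = ((3 * ((r : ℝ) * h / 3) : ℝ) : ℂ) by push_cast; ring]
  rw [show ((r : ℝ) * h + 2 * Real.pi * (((1 : ℕ) : ℝ) - 1)) / 3 = (r : ℝ) * h / 3 by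
      push_cast; ring,
    show 2 * ((r : ℝ) * h + 2 * Real.pi * (((1 : ℕ) : ℝ) - 1)) / 3 = 2 * ((r : ℝ) * h / 3) by
      push_cast; ring,
    show ((r : ℝ) * h + 2 * Real.pi * (((2 : ℕ) : ℝ) - 1)) / 3
        = (r : ℝ) * h / 3 + 2 * Real.pi / 3 by push_cast; ring,
    show 2 * ((r : ℝ) * h + 2 * Real.pi * (((2 : ℕ) : ℝ) - 1)) / 3
        = 2 * ((r : ℝ) * h / 3) + 4 * Real.pi / 3 by push_cast; ring,
    show ((r : ℝ) * h + 2 * Real.pi * (((3 : ℕ) : ℝ) - 1)) / 3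
        = (r : ℝ) * h / 3 + 4 * Real.pi / 3 by push_cast; ring,
    show 2 * ((r : ℝ) * h + 2 * Real.pi * (((3 : ℕ) : ℝ) - 1)) / 3
        = 2 * ((r : ℝ) * h / 3) + 8 * Real.pi / 3 by push_cast; ring]
  exact fig8_aux u ((r : ℝ) * h / 3)
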